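/- Let L be the Cantor string, i.e., the fractal string whose lengths are 3^{−(n+1)} repeated with multiplicity 2^n for n = 0, 1, 2, … (the lengths of the complementary intervals of the ternary Cantor set in [0,1]). Then the Minkowski dimension of L is D = log 2 / log 3, and L is Minkowski nondegenerate but not Minkowski measurable: 0 < M_* < M^* < ∞ with M_* ≠ M^*. -/

import Mathlib

open Filter Topology

/-- A fractal string: a nonincreasing, positive, summable sequence of lengths
`ℓ 0 ≥ ℓ 1 ≥ ⋯ > 0` (indexed from `0`, representing `ℓ_1, ℓ_2, …`). -/
def IsFractalString (ℓ : ℕ → ℝ) : Prop :=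
  (∀ j, 0 < ℓ j) ∧ Antitone ℓ ∧ Summable ℓ

/-- The volume `V(ε) = ∑ⱼ min(ℓⱼ, 2ε)` of the inner ε-neighborhood of the boundary. -/
noncomputable def stringVol (ℓ : ℕ → ℝ) (ε : ℝ) : ℝ :=
  ∑' j, min (ℓ j) (2 * ε)

/-- Upper `d`-dimensional Minkowski content `limsup_{ε→0⁺} V(ε)/ε^{1-d}`. -/
noncomputable def upperContent (ℓ : ℕ → ℝ) (d : ℝ) : ENNReal :=
  Filter.limsup (fun ε : ℝ => ENNReal.ofReal (stringVol ℓ ε / ε ^ (1 - d))) (𝓝[>] 0)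

/-- Lower `d`-dimensional Minkowski content `liminf_{ε→0⁺} V(ε)/ε^{1-d}`. -/
noncomputable def lowerContent (ℓ : ℕ → ℝ) (d : ℝ) : ENNReal :=
  Filter.liminf (fun ε : ℝ => ENNReal.ofReal (stringVol ℓ ε / ε ^ (1 - d))) (𝓝[>] 0)

/-- The Minkowski dimension `D = inf {d ≥ 0 : M*_d < ∞}`. -/
noncomputable def minkDim (ℓ : ℕ → ℝ) : ℝ :=
  sInf {d : ℝ | 0 ≤ d ∧ upperContent ℓ d < ⊤}

/-- The spectral (frequency) counting function `N_ν(x) = ∑ⱼ ⌊ℓⱼ x⌋`. -/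
noncomputable def spectralCount (ℓ : ℕ → ℝ) (x : ℝ) : ℝ :=
  ∑' j, (⌊ℓ j * x⌋₊ : ℝ)

/-- The Weyl term `W(x) = (∑ⱼ ℓⱼ) x`. -/
noncomputable def weylTerm (ℓ : ℕ → ℝ) (x : ℝ) : ℝ :=
  (∑' j, ℓ j) * x

/-- The geometric counting function `N_L(x) = #{j ≥ 1 : ℓⱼ⁻¹ ≤ x}`. -/
noncomputable def geomCount (ℓ : ℕ → ℝ) (x : ℝ) : ℝ :=
  (({j : ℕ | (ℓ j)⁻¹ ≤ x}).ncard : ℝ)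

/-- The "asymptotic second term" `φ_ν(x) = W(x) - N_ν(x)`. -/
noncomputable def phiNu (ℓ : ℕ → ℝ) (x : ℝ) : ℝ :=
  weylTerm ℓ x - spectralCount ℓ x

/-- `L` is Minkowski measurable (in dimension `D`) with Minkowski content `M`:
`V(ε)/ε^{1-D} → M` as `ε → 0⁺`. -/
def MinkMeasurableWith (ℓ : ℕ → ℝ) (D M : ℝ) : Prop :=
  Tendsto (fun ε : ℝ => stringVol ℓ ε / ε ^ (1 - D)) (𝓝[>] (0:ℝ)) (𝓝 M)

/-- `L` is Minkowski measurable in dimension `D` (with some positive finite content). -/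
def MinkMeasurable (ℓ : ℕ → ℝ) (D : ℝ) : Prop :=
  ∃ M : ℝ, 0 < M ∧ MinkMeasurableWith ℓ D M

/-- Hypothesis (6.1): `N_ν(x) = W(x) - C x^D + o(x^D)` as `x → +∞`. -/
def SpectralAsymp (ℓ : ℕ → ℝ) (D C : ℝ) : Prop :=
  Tendsto (fun x : ℝ => (spectralCount ℓ x - (weylTerm ℓ x - C * x ^ D)) / x ^ D)
    atTop (𝓝 0)

/-- The inverse spectral problem `(ISP)_D`: every fractal string of Minkowski
dimension `D` satisfying (6.1) is Minkowski measurable. -/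
def ISP (D : ℝ) : Prop :=
  ∀ ℓ : ℕ → ℝ, IsFractalString ℓ → minkDim ℓ = D →
    (∃ C : ℝ, C ≠ 0 ∧ SpectralAsymp ℓ D C) → MinkMeasurable ℓ D

/-- The Cantor string: the lengths `3^{-(n+1)}` repeated with multiplicity `2^n`
(`n = 0, 1, 2, …`), listed in nonincreasing order; the `j`-th length (indexed
from `0`) is `3^{-(⌊log₂(j+1)⌋ + 1)}`. -/
noncomputable def cantorString (j : ℕ) : ℝ :=
  (3 : ℝ) ^ (-((Nat.log 2 (j + 1) : ℤ) + 1))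

namespace CantorAux

lemma cantor_eq (j : ℕ) : cantorString j = (1/3 : ℝ) ^ (Nat.log 2 (j+1) + 1) := by
  unfold cantorString
  rw [zpow_neg, show ((Nat.log 2 (j+1) : ℤ) + 1) = ((Nat.log 2 (j+1) + 1 : ℕ) : ℤ) by push_cast; ring,
    zpow_natCast, one_div, inv_pow]

lemma cantor_pos (j : ℕ) : 0 < cantorString j := by
  rw [cantor_eq]; positivity

lemma cantor_block {N k : ℕ} (hk : k < 2^N) :
    cantorString (k + (2^N - 1)) = (1/3 : ℝ) ^ (N+1) := by
  rw [cantor_eq]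
  have h1 : k + (2^N - 1) + 1 = k + 2^N := by
    have : 1 ≤ 2^N := Nat.one_le_two_pow
    omega
  rw [h1, Nat.log_eq_of_pow_le_of_lt_pow (Nat.le_add_left _ _) (by
    rw [pow_succ]; omega)]

lemma cantor_ge {j N : ℕ} (h : j < 2^N - 1) : (1/3 : ℝ)^N ≤ cantorString j := by
  rw [cantor_eq]
  have hlog : Nat.log 2 (j+1) < N := Nat.log_lt_of_lt_pow (by omega) (by omega)
  exact pow_le_pow_of_le_one (by norm_num) (by norm_num) (by omega)

lemma cantor_le {N k : ℕ} : cantorString (k + (2^N - 1)) ≤ (1/3 : ℝ)^(N+1) := by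
  rw [cantor_eq]
  have h1 : k + (2^N - 1) + 1 = k + 2^N := by
    have : 1 ≤ 2^N := Nat.one_le_two_pow
    omega
  have hlog : N ≤ Nat.log 2 (k + (2^N - 1) + 1) := by
    rw [h1]
    exact (Nat.le_log_iff_pow_le (by norm_num) (by positivity)).mpr (Nat.le_add_left _ _)
  exact pow_le_pow_of_le_one (by norm_num) (by norm_num) (by omega)

lemma sum_range (N : ℕ) :
    ∑ j ∈ Finset.range (2^N - 1), cantorString j = 1 - (2/3 : ℝ)^N := by
  induction N with
  | zero => simp
  | succ N ih =>
    have hle : 2^N - 1 ≤ 2^(N+1) - 1 := by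
      have := Nat.pow_le_pow_right (by norm_num : 1 ≤ 2) (Nat.le_succ N); omega
    rw [Finset.range_eq_Ico, ← Finset.sum_Ico_consecutive _ (Nat.zero_le _) hle,
      ← Finset.range_eq_Ico, ih, Finset.sum_Ico_eq_sum_range]
    have hcard : 2^(N+1) - 1 - (2^N - 1) = 2^N := by
      have h1 : 1 ≤ 2^N := Nat.one_le_two_pow
      have : 2^(N+1) = 2 * 2^N := by ring
      omega
    rw [hcard]
    have : ∀ k ∈ Finset.range (2^N), cantorString (2^N - 1 + k) = (1/3 : ℝ)^(N+1) := by
      intro k hk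
      rw [add_comm]
      exact cantor_block (Finset.mem_range.mp hk)
    rw [Finset.sum_congr rfl this, Finset.sum_const, Finset.card_range, nsmul_eq_mul]
    have h23 : ((1:ℝ)/3)^N * 2^N = (2/3)^N := by rw [← mul_pow]; norm_num
    rw [pow_succ, pow_succ]
    push_cast
    linear_combination (1/3 : ℝ) * h23

lemma summable : Summable cantorString := by
  apply summable_of_sum_range_le (c := 1) (fun j => (cantor_pos j).le)
  intro n
  calc ∑ j ∈ Finset.range n, cantorString j
      ≤ ∑ j ∈ Finset.range (2^n - 1), cantorString j := by
        apply Finset.sum_le_sum_of_subset_of_nonneg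
        · exact Finset.range_subset_range.mpr (by have := Nat.lt_two_pow_self (n := n); omega)
        · exact fun j _ _ => (cantor_pos j).le
    _ = 1 - (2/3 : ℝ)^n := sum_range n
    _ ≤ 1 := by nlinarith [pow_nonneg (by norm_num : (0:ℝ) ≤ 2/3) n]

lemma tsum_eq : ∑' j, cantorString j = 1 := by
  have hs := summable
  have h1 : Tendsto (fun N => ∑ j ∈ Finset.range (2^N - 1), cantorString j) atTop
      (𝓝 (∑' j, cantorString j)) := by
    exact hs.hasSum.tendsto_sum_nat.comp
      (tendsto_atTop_mono (fun N => by have := Nat.lt_two_pow_self (n := N); simp only [id_eq]; omega) tendsto_id)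
  have h2 : Tendsto (fun N => ∑ j ∈ Finset.range (2^N - 1), cantorString j) atTop (𝓝 1) := by
    simp only [sum_range]
    have : Tendsto (fun N : ℕ => (2/3 : ℝ)^N) atTop (𝓝 0) :=
      tendsto_pow_atTop_nhds_zero_of_lt_one (by norm_num) (by norm_num)
    simpa using (tendsto_const_nhds.sub this)
  exact tendsto_nhds_unique h1 h2

lemma tail (N : ℕ) : ∑' k, cantorString (k + (2^N - 1)) = (2/3 : ℝ)^N := by
  have h := Summable.sum_add_tsum_nat_add (f := cantorString) (2^N - 1) summable
  rw [tsum_eq, sum_range] at h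
  linarith

end CantorAux

namespace CantorAux

noncomputable def Dc : ℝ := Real.log 2 / Real.log 3

lemma log3_pos : 0 < Real.log 3 := Real.log_pos (by norm_num)

lemma Dc_pos : 0 < Dc := div_pos (Real.log_pos (by norm_num)) log3_pos

lemma Dc_lt_one : Dc < 1 :=
  (div_lt_one log3_pos).mpr (Real.log_lt_log (by norm_num) (by norm_num))

lemma one_sub_Dc_pos : 0 < 1 - Dc := by linarith [Dc_lt_one]

lemma rpow_third_Dc : (1/3 : ℝ) ^ Dc = 1/2 := by
  have h3 : (3:ℝ) ^ Dc = 2 := by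
    have : Dc = Real.logb 3 2 := by rw [Real.logb]; rfl
    rw [this]
    exact Real.rpow_logb (by norm_num) (by norm_num) (by norm_num)
  rw [one_div, one_div, Real.inv_rpow (by norm_num : (0:ℝ) ≤ 3), h3]

lemma pow_rpow_comm {a : ℝ} (ha : 0 ≤ a) (N : ℕ) (y : ℝ) :
    ((a ^ N : ℝ)) ^ y = (a ^ y) ^ N := by
  rw [← Real.rpow_natCast a N, ← Real.rpow_mul ha, mul_comm, Real.rpow_mul ha,
    Real.rpow_natCast]

lemma rpow_third_one_sub_Dc : (1/3 : ℝ) ^ (1 - Dc) = 2/3 := by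
  rw [Real.rpow_sub (by norm_num), Real.rpow_one, rpow_third_Dc]
  norm_num

lemma third_pow_rpow (N : ℕ) : (((1/3: ℝ) ^ N)) ^ (1 - Dc) = (2/3 : ℝ)^N := by
  rw [pow_rpow_comm (by norm_num), rpow_third_one_sub_Dc]

lemma third_pow_rpow_Dc (N : ℕ) : (((1/3: ℝ) ^ N)) ^ Dc = (1/2 : ℝ)^N := by
  rw [pow_rpow_comm (by norm_num), rpow_third_Dc]

lemma summable_min {t : ℝ} (ht : 0 < t) : Summable (fun j => min (cantorString j) t) := by
  apply Summable.of_nonneg_of_le (fun j => le_min (cantor_pos j).le ht.le)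
    (fun j => min_le_left _ _) summable

lemma vol_formula {ε : ℝ} {N : ℕ} (hε : 0 < ε)
    (h1 : (1/3 : ℝ)^(N+1) < 2*ε) (h2 : 2*ε ≤ (1/3 : ℝ)^N) :
    stringVol cantorString ε = (2*ε) * (2^N - 1) + (2/3 : ℝ)^N := by
  have hsm := summable_min (t := 2*ε) (by linarith)
  unfold stringVol
  rw [← Summable.sum_add_tsum_nat_add (f := fun j => min (cantorString j) (2*ε)) (2^N - 1) hsm]
  have hfirst : ∑ j ∈ Finset.range (2^N - 1), min (cantorString j) (2*ε)
      = (2*ε) * (2^N - 1) := by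
    rw [Finset.sum_congr rfl (fun j hj => min_eq_right
      (le_trans h2 (cantor_ge (Finset.mem_range.mp hj))))]
    rw [Finset.sum_const, Finset.card_range, nsmul_eq_mul]
    have h1' : (1:ℕ) ≤ 2^N := Nat.one_le_two_pow
    rw [Nat.cast_sub h1']
    push_cast
    ring
  have hsecond : ∑' (k : ℕ), min (cantorString (k + (2^N - 1))) (2*ε) = (2/3 : ℝ)^N := by
    rw [tsum_congr (fun k => min_eq_left (le_of_lt (lt_of_le_of_lt cantor_le h1)))]
    exact tail N
  rw [hfirst, hsecond]

end CantorAux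

namespace CantorAux

lemma exists_N {t : ℝ} (ht : 0 < t) (ht1 : t ≤ 1) :
    ∃ N : ℕ, (1/3 : ℝ)^(N+1) < t ∧ t ≤ (1/3 : ℝ)^N := by
  have hex : ∃ n : ℕ, (1/3 : ℝ)^n < t := exists_pow_lt_of_lt_one ht (by norm_num)
  classical
  set n := Nat.find hex with hn
  have hspec : (1/3 : ℝ)^n < t := Nat.find_spec hex
  have hn0 : n ≠ 0 := by
    intro h
    rw [h] at hspec
    simp at hspec
    linarith
  refine ⟨n - 1, ?_, ?_⟩
  · have hh : n - 1 + 1 = n := by omega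
    rwa [hh]
  · have := Nat.find_min hex (m := n - 1) (by omega)
    linarith [not_lt.mp this]

lemma vol_bounds {ε : ℝ} (h0 : 0 < ε) (h1 : ε ≤ 1/2) :
    ε ^ (1 - Dc) ≤ stringVol cantorString ε ∧
    stringVol cantorString ε ≤ 5 * ε ^ (1 - Dc) := by
  obtain ⟨N, hN1, hN2⟩ := exists_N (t := 2*ε) (by linarith) (by linarith)
  have ht : (0:ℝ) < 2*ε := by linarith
  rw [vol_formula h0 hN1 hN2]
  have h2N : (1:ℝ) ≤ 2^N := one_le_pow₀ (by norm_num)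
  have hεt : ε ≤ 2*ε := by linarith
  have htpow : (2*ε) ^ (1 - Dc) ≤ ((1/3:ℝ)^N) ^ (1 - Dc) :=
    Real.rpow_le_rpow ht.le hN2 one_sub_Dc_pos.le
  have hεpow : ε ^ (1 - Dc) ≤ (2*ε) ^ (1 - Dc) :=
    Real.rpow_le_rpow h0.le hεt one_sub_Dc_pos.le
  constructor
  · have : ε ^ (1 - Dc) ≤ (2/3:ℝ)^N := by
      rw [← third_pow_rpow N]
      exact hεpow.trans htpow
    nlinarith [this, mul_nonneg ht.le (by linarith : (0:ℝ) ≤ 2^N - 1)]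
  · -- upper bound
    have hsplit : (2*ε) = (2*ε)^(1-Dc) * (2*ε)^Dc := by
      rw [← Real.rpow_add ht]; norm_num
    have hDpow : (2*ε)^Dc ≤ ((1/3:ℝ)^N)^Dc :=
      Real.rpow_le_rpow ht.le hN2 Dc_pos.le
    have hterm1 : (2*ε) * (2^N - 1) ≤ (2*ε)^(1-Dc) := by
      calc (2*ε) * (2^N - 1) ≤ (2*ε) * 2^N := by
            nlinarith
        _ = (2*ε)^(1-Dc) * ((2*ε)^Dc * 2^N) := by rw [← mul_assoc, ← hsplit]
        _ ≤ (2*ε)^(1-Dc) * (((1/3:ℝ)^N)^Dc * 2^N) := by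
            apply mul_le_mul_of_nonneg_left _ (Real.rpow_nonneg ht.le _)
            exact mul_le_mul_of_nonneg_right hDpow (by positivity)
        _ = (2*ε)^(1-Dc) * ((1/2:ℝ)^N * 2^N) := by rw [third_pow_rpow_Dc]
        _ = (2*ε)^(1-Dc) := by
            rw [← mul_pow]; norm_num
    have hterm2 : (2/3:ℝ)^N ≤ (3/2) * (2*ε)^(1-Dc) := by
      have hb : ((1/3:ℝ)^(N+1))^(1-Dc) ≤ (2*ε)^(1-Dc) :=
        Real.rpow_le_rpow (by positivity) hN1.le one_sub_Dc_pos.le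
      rw [third_pow_rpow (N+1)] at hb
      rw [pow_succ] at hb
      nlinarith [hb]
    have h2pow : (2:ℝ)^((1:ℝ)-Dc) ≤ 2 := by
      calc (2:ℝ)^((1:ℝ)-Dc) ≤ (2:ℝ)^(1:ℝ) :=
            Real.rpow_le_rpow_of_exponent_le (by norm_num) (by linarith [Dc_pos])
        _ = 2 := Real.rpow_one 2
    have hmul : (2*ε)^(1-Dc) = (2:ℝ)^((1:ℝ)-Dc) * ε^(1-Dc) :=
      Real.mul_rpow (by norm_num) h0.le
    have hεp : (0:ℝ) ≤ ε ^ (1-Dc) := Real.rpow_nonneg h0.le _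
    calc (2*ε) * (2^N - 1) + (2/3:ℝ)^N ≤ (5/2) * (2*ε)^(1-Dc) := by linarith
      _ = (5/2) * ((2:ℝ)^((1:ℝ)-Dc) * ε^(1-Dc)) := by rw [hmul]
      _ ≤ (5/2) * (2 * ε^(1-Dc)) := by
          apply mul_le_mul_of_nonneg_left _ (by norm_num)
          exact mul_le_mul_of_nonneg_right h2pow hεp
      _ = 5 * ε^(1-Dc) := by ring

end CantorAux

namespace CantorAux

lemma log3_lt : Real.log 3 < 1.1 := by
  have hexp : (3:ℝ)^(10:ℕ) < Real.exp 11 := by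
    have h11 : Real.exp 11 = (Real.exp 1)^(11:ℕ) := by
      rw [← Real.exp_nat_mul]; norm_num
    have : (2.7182818283:ℝ)^(11:ℕ) < (Real.exp 1)^(11:ℕ) :=
      pow_lt_pow_left₀ Real.exp_one_gt_d9 (by norm_num) (by norm_num)
    rw [h11]
    calc (3:ℝ)^(10:ℕ) < (2.7182818283:ℝ)^(11:ℕ) := by norm_num
      _ < (Real.exp 1)^(11:ℕ) := this
  have h10 : Real.log ((3:ℝ)^(10:ℕ)) < 11 :=
    calc Real.log ((3:ℝ)^(10:ℕ)) < Real.log (Real.exp 11) :=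
          Real.log_lt_log (by positivity) hexp
      _ = 11 := Real.log_exp 11
  rw [Real.log_pow] at h10
  push_cast at h10
  norm_num
  linarith

lemma two_rpow_Dc_gt : (192/127 : ℝ) < (2:ℝ) ^ Dc := by
  have hx : (2:ℝ)^Dc = Real.exp (Real.log 2 * Dc) := Real.rpow_def_of_pos (by norm_num) Dc
  set x : ℝ := Real.log 2 * Dc with hxdef
  have hxval : x = (Real.log 2)^2 / Real.log 3 := by
    rw [hxdef]; unfold Dc; ring
  have ha : (0.6931471803:ℝ) < Real.log 2 := Real.log_two_gt_d9
  have hb : Real.log 3 < 1.1 := log3_lt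
  have hx0 : (0.6931471803:ℝ)^2 / 1.1 ≤ x := by
    rw [hxval]
    have h1 : (0.6931471803:ℝ)^2 ≤ (Real.log 2)^2 := by nlinarith
    have h2 : (Real.log 2)^2 / 1.1 ≤ (Real.log 2)^2 / Real.log 3 :=
      div_le_div_of_nonneg_left (by positivity) log3_pos (by linarith)
    calc (0.6931471803:ℝ)^2 / 1.1 ≤ (Real.log 2)^2 / 1.1 := by gcongr
      _ ≤ (Real.log 2)^2 / Real.log 3 := h2
  have hexpx : Real.exp x = (Real.exp (x/6))^(6:ℕ) := by
    rw [← Real.exp_nat_mul]; congr 1; push_cast; ring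
  have hx6 : (0:ℝ) ≤ x/6 := by
    have : (0:ℝ) ≤ (0.6931471803:ℝ)^2 / 1.1 := by positivity
    linarith
  have hlow : (1 + x/6)^(6:ℕ) ≤ Real.exp x := by
    rw [hexpx]
    apply pow_le_pow_left₀ (by linarith)
    linarith [Real.add_one_le_exp (x/6)]
  have hnum : (192/127:ℝ) < (1 + ((0.6931471803:ℝ)^2 / 1.1)/6)^(6:ℕ) := by norm_num
  have hmono : (1 + ((0.6931471803:ℝ)^2 / 1.1)/6)^(6:ℕ) ≤ (1 + x/6)^(6:ℕ) := by
    apply pow_le_pow_left₀ (by positivity)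
    linarith
  rw [hx]
  calc (192/127:ℝ) < (1 + ((0.6931471803:ℝ)^2 / 1.1)/6)^(6:ℕ) := hnum
    _ ≤ (1 + x/6)^(6:ℕ) := hmono
    _ ≤ Real.exp x := hlow

lemma key_ineq : (3/2) * (4:ℝ)^((1:ℝ)-Dc) < (127/64) * (2:ℝ)^((1:ℝ)-Dc) := by
  set y : ℝ := (2:ℝ)^((1:ℝ)-Dc) with hy
  have hy0 : 0 < y := Real.rpow_pos_of_pos (by norm_num) _
  have h4 : (4:ℝ)^((1:ℝ)-Dc) = y^2 := by
    rw [hy, show (4:ℝ) = 2^(2:ℕ) by norm_num, pow_rpow_comm (by norm_num)]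
  have hylt : y < 127/96 := by
    have h2D : (0:ℝ) < (2:ℝ)^Dc := Real.rpow_pos_of_pos (by norm_num) _
    have hsub : y = 2 / (2:ℝ)^Dc := by
      rw [hy, Real.rpow_sub (by norm_num), Real.rpow_one]
    rw [hsub]
    rw [div_lt_iff₀ h2D]
    calc (2:ℝ) = (127/96) * (192/127) := by norm_num
      _ < (127/96) * (2:ℝ)^Dc := by
          apply mul_lt_mul_of_pos_left two_rpow_Dc_gt (by norm_num)
  rw [h4]
  nlinarith

end CantorAux

namespace CantorAux

lemma eval_high {N : ℕ} (h6 : 6 ≤ N) :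
    (127/64) * (2:ℝ)^((1:ℝ)-Dc) ≤
      stringVol cantorString ((1/3:ℝ)^N/2) / ((1/3:ℝ)^N/2)^((1:ℝ)-Dc) := by
  have hε : (0:ℝ) < (1/3:ℝ)^N/2 := by positivity
  have h2ε : 2*((1/3:ℝ)^N/2) = (1/3:ℝ)^N := by ring
  have h13pos : (0:ℝ) < (1/3:ℝ)^N := by positivity
  have hlt : (1/3:ℝ)^(N+1) < 2*((1/3:ℝ)^N/2) := by
    rw [h2ε, pow_succ]; nlinarith [h13pos]
  have hle : 2*((1/3:ℝ)^N/2) ≤ (1/3:ℝ)^N := le_of_eq h2ε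
  have hV : stringVol cantorString ((1/3:ℝ)^N/2) = 2*(2/3:ℝ)^N - (1/3:ℝ)^N := by
    rw [vol_formula (N := N) hε hlt hle, h2ε]
    have h23 : ((1:ℝ)/3)^N * 2^N = (2/3)^N := by rw [← mul_pow]; norm_num
    nlinarith [h23]
  have hεpow : ((1/3:ℝ)^N/2)^((1:ℝ)-Dc) = (1/2:ℝ)^((1:ℝ)-Dc) * (2/3:ℝ)^N := by
    rw [show (1/3:ℝ)^N/2 = (1/2:ℝ) * (1/3:ℝ)^N by ring,
      Real.mul_rpow (by norm_num) (by positivity), third_pow_rpow]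
  rw [le_div_iff₀ (by positivity), hV, hεpow]
  have hone : (2:ℝ)^((1:ℝ)-Dc) * (1/2:ℝ)^((1:ℝ)-Dc) = 1 := by
    rw [← Real.mul_rpow (by norm_num) (by norm_num)]; norm_num
  have hhalf : ((1/2:ℝ))^N ≤ (1/64:ℝ) := by
    calc ((1/2:ℝ))^N ≤ (1/2:ℝ)^(6:ℕ) :=
          pow_le_pow_of_le_one (by norm_num) (by norm_num) h6
      _ = 1/64 := by norm_num
  have h13 : (1/3:ℝ)^N = (1/2:ℝ)^N * (2/3:ℝ)^N := by rw [← mul_pow]; norm_num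
  have h23pos : (0:ℝ) < (2/3:ℝ)^N := by positivity
  calc (127/64) * (2:ℝ)^((1:ℝ)-Dc) * ((1/2:ℝ)^((1:ℝ)-Dc) * (2/3:ℝ)^N)
      = (2:ℝ)^((1:ℝ)-Dc) * (1/2:ℝ)^((1:ℝ)-Dc) * ((127/64) * (2/3:ℝ)^N) := by ring
    _ = (127/64) * (2/3:ℝ)^N := by rw [hone]; ring
    _ ≤ 2*(2/3:ℝ)^N - (1/3:ℝ)^N := by rw [h13]; nlinarith [hhalf, h23pos]

lemma eval_low (N : ℕ) :
    stringVol cantorString ((1/3:ℝ)^N/4) / ((1/3:ℝ)^N/4)^((1:ℝ)-Dc) ≤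
      (3/2) * (4:ℝ)^((1:ℝ)-Dc) := by
  have hε : (0:ℝ) < (1/3:ℝ)^N/4 := by positivity
  have h2ε : 2*((1/3:ℝ)^N/4) = (1/3:ℝ)^N/2 := by ring
  have h13pos : (0:ℝ) < (1/3:ℝ)^N := by positivity
  have hlt : (1/3:ℝ)^(N+1) < 2*((1/3:ℝ)^N/4) := by
    rw [h2ε, pow_succ]; linarith
  have hle : 2*((1/3:ℝ)^N/4) ≤ (1/3:ℝ)^N := by rw [h2ε]; linarith
  have hV : stringVol cantorString ((1/3:ℝ)^N/4)
      = (3/2)*(2/3:ℝ)^N - (1/3:ℝ)^N/2 := by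
    rw [vol_formula (N := N) hε hlt hle, h2ε]
    have h23 : ((1:ℝ)/3)^N * 2^N = (2/3)^N := by rw [← mul_pow]; norm_num
    nlinarith [h23]
  have hεpow : ((1/3:ℝ)^N/4)^((1:ℝ)-Dc) = (1/4:ℝ)^((1:ℝ)-Dc) * (2/3:ℝ)^N := by
    rw [show (1/3:ℝ)^N/4 = (1/4:ℝ) * (1/3:ℝ)^N by ring,
      Real.mul_rpow (by norm_num) (by positivity), third_pow_rpow]
  rw [div_le_iff₀ (by positivity), hV, hεpow]
  have hone : (4:ℝ)^((1:ℝ)-Dc) * (1/4:ℝ)^((1:ℝ)-Dc) = 1 := by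
    rw [← Real.mul_rpow (by norm_num) (by norm_num)]; norm_num
  calc (3/2)*(2/3:ℝ)^N - (1/3:ℝ)^N/2 ≤ (3/2)*(2/3:ℝ)^N := by linarith
    _ = (3/2) * (4:ℝ)^((1:ℝ)-Dc) * ((1/4:ℝ)^((1:ℝ)-Dc) * (2/3:ℝ)^N) := by
        rw [show (3/2) * (4:ℝ)^((1:ℝ)-Dc) * ((1/4:ℝ)^((1:ℝ)-Dc) * (2/3:ℝ)^N)
          = (4:ℝ)^((1:ℝ)-Dc) * (1/4:ℝ)^((1:ℝ)-Dc) * ((3/2) * (2/3:ℝ)^N) by ring, hone]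
        ring

end CantorAux

namespace CantorAux

lemma ratio_mem : ∀ᶠ ε in 𝓝[>](0:ℝ),
    1 ≤ stringVol cantorString ε / ε^((1:ℝ)-Dc) ∧
    stringVol cantorString ε / ε^((1:ℝ)-Dc) ≤ 5 := by
  filter_upwards [Ioc_mem_nhdsGT (by norm_num : (0:ℝ) < 1/2)] with ε hε
  obtain ⟨hlo, hhi⟩ := vol_bounds hε.1 hε.2
  have hp : (0:ℝ) < ε^((1:ℝ)-Dc) := Real.rpow_pos_of_pos hε.1 _
  constructor
  · rw [le_div_iff₀ hp]; linarith
  · rw [div_le_iff₀ hp]; linarith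

lemma upper_le : upperContent cantorString Dc ≤ ENNReal.ofReal 5 := by
  apply Filter.limsup_le_of_le (by isBoundedDefault)
  filter_upwards [ratio_mem] with ε hε
  exact ENNReal.ofReal_le_ofReal hε.2

lemma lower_ge : (1:ENNReal) ≤ lowerContent cantorString Dc := by
  apply Filter.le_liminf_of_le (by isBoundedDefault)
  filter_upwards [ratio_mem] with ε hε
  calc (1:ENNReal) = ENNReal.ofReal 1 := by simp
    _ ≤ _ := ENNReal.ofReal_le_ofReal hε.1

lemma upper_lt_top : upperContent cantorString Dc < ⊤ :=
  lt_of_le_of_lt upper_le ENNReal.ofReal_lt_top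

lemma upperContent_eq_top {d : ℝ} (hd : d < Dc) : upperContent cantorString d = ⊤ := by
  have h1 : Tendsto (fun ε : ℝ => (ε⁻¹)^(Dc - d)) (𝓝[>](0:ℝ)) atTop :=
    (tendsto_rpow_atTop (by linarith : 0 < Dc - d)).comp tendsto_inv_nhdsGT_zero
  have h2 : Tendsto (fun ε : ℝ => ε^(d - Dc)) (𝓝[>](0:ℝ)) atTop := by
    apply h1.congr'
    filter_upwards [self_mem_nhdsWithin] with ε (hε : 0 < ε)
    rw [Real.inv_rpow hε.le, ← Real.rpow_neg hε.le]
    norm_num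
  have h3 : ∀ᶠ ε in 𝓝[>](0:ℝ),
      ε^(d - Dc) ≤ stringVol cantorString ε / ε^((1:ℝ)-d) := by
    filter_upwards [Ioc_mem_nhdsGT (by norm_num : (0:ℝ) < 1/2)] with ε hε
    obtain ⟨hlo, _⟩ := vol_bounds hε.1 hε.2
    have hp : (0:ℝ) < ε^((1:ℝ)-d) := Real.rpow_pos_of_pos hε.1 _
    have heq : ε^((1:ℝ)-Dc) / ε^((1:ℝ)-d) = ε^(d - Dc) := by
      rw [← Real.rpow_sub hε.1]
      ring_nf
    calc ε^(d - Dc) = ε^((1:ℝ)-Dc) / ε^((1:ℝ)-d) := heq.symm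
      _ ≤ stringVol cantorString ε / ε^((1:ℝ)-d) := by gcongr
  have h4 : Tendsto (fun ε : ℝ => stringVol cantorString ε / ε^((1:ℝ)-d))
      (𝓝[>](0:ℝ)) atTop := tendsto_atTop_mono' _ h3 h2
  have h5 : Tendsto (fun ε : ℝ => ENNReal.ofReal (stringVol cantorString ε / ε^((1:ℝ)-d)))
      (𝓝[>](0:ℝ)) (𝓝 ⊤) := ENNReal.tendsto_ofReal_atTop.comp h4
  exact h5.limsup_eq

lemma minkDim_eq : minkDim cantorString = Dc := by
  have hmem : Dc ∈ {d : ℝ | 0 ≤ d ∧ upperContent cantorString d < ⊤} :=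
    ⟨Dc_pos.le, upper_lt_top⟩
  apply le_antisymm
  · exact csInf_le ⟨0, fun d hd => hd.1⟩ hmem
  · apply le_csInf ⟨Dc, hmem⟩
    intro d hd
    by_contra hlt
    push_neg at hlt
    rw [Set.mem_setOf_eq, upperContent_eq_top hlt] at hd
    exact absurd hd.2 (lt_irrefl _)

lemma freq_high :
    ENNReal.ofReal ((127/64) * (2:ℝ)^((1:ℝ)-Dc)) ≤ upperContent cantorString Dc := by
  apply Filter.le_limsup_of_frequently_le'
  have hu : Tendsto (fun N : ℕ => (1/3:ℝ)^N/2) atTop (𝓝[>](0:ℝ)) := by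
    apply tendsto_nhdsWithin_of_tendsto_nhds_of_eventually_within
    · simpa using (tendsto_pow_atTop_nhds_zero_of_lt_one
        (by norm_num : (0:ℝ) ≤ 1/3) (by norm_num)).div_const 2
    · exact Filter.Eventually.of_forall (fun N => Set.mem_Ioi.mpr (by positivity))
  apply hu.frequently
  apply Filter.Eventually.frequently
  filter_upwards [eventually_ge_atTop 6] with N hN
  exact ENNReal.ofReal_le_ofReal (eval_high hN)

lemma freq_low :
    lowerContent cantorString Dc ≤ ENNReal.ofReal ((3/2) * (4:ℝ)^((1:ℝ)-Dc)) := by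
  apply Filter.liminf_le_of_frequently_le'
  have hu : Tendsto (fun N : ℕ => (1/3:ℝ)^N/4) atTop (𝓝[>](0:ℝ)) := by
    apply tendsto_nhdsWithin_of_tendsto_nhds_of_eventually_within
    · simpa using (tendsto_pow_atTop_nhds_zero_of_lt_one
        (by norm_num : (0:ℝ) ≤ 1/3) (by norm_num)).div_const 4
    · exact Filter.Eventually.of_forall (fun N => Set.mem_Ioi.mpr (by positivity))
  apply hu.frequently
  apply Filter.Eventually.frequently
  exact Filter.Eventually.of_forall (fun N => ENNReal.ofReal_le_ofReal (eval_low N))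

end CantorAux

/-- (Lapidus–Pomerance) The Cantor string has Minkowski
dimension `D = log 2 / log 3` and is Minkowski nondegenerate but not Minkowski
measurable: `0 < M_* < M^* < ∞`. -/
theorem cantorString_nondegenerate_not_measurable :
    minkDim cantorString = Real.log 2 / Real.log 3 ∧
    0 < lowerContent cantorString (Real.log 2 / Real.log 3) ∧
    lowerContent cantorString (Real.log 2 / Real.log 3) <
      upperContent cantorString (Real.log 2 / Real.log 3) ∧
    upperContent cantorString (Real.log 2 / Real.log 3) < ⊤ := by
  refine ⟨CantorAux.minkDim_eq, ?_, ?_, CantorAux.upper_lt_top⟩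
  · exact lt_of_lt_of_le zero_lt_one CantorAux.lower_ge
  · calc lowerContent cantorString (Real.log 2 / Real.log 3)
        ≤ ENNReal.ofReal ((3/2) * (4:ℝ)^((1:ℝ)-CantorAux.Dc)) := CantorAux.freq_low
      _ < ENNReal.ofReal ((127/64) * (2:ℝ)^((1:ℝ)-CantorAux.Dc)) := by
          rw [ENNReal.ofReal_lt_ofReal_iff (by positivity)]
          exact CantorAux.key_ineq
      _ ≤ upperContent cantorString (Real.log 2 / Real.log 3) := CantorAux.freq_high
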